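/- Define x_1 = 0 and x_i = 2^(i−2) for 2 ≤ i ≤ n+2. For every polynomial p with nonnegative integer coefficients there exists an integer n such that there is no function a : {1, …, n+2} → ℕ satisfying both: (i) a_i ≤ p(n) for all i ∈ {1, …, n+2}; and (ii) for all pairwise distinct indices i, j, k ∈ {1, …, n+2}, the triple {x_i, x_j, x_k} forms a 3-term arithmetic progression if and only if the triple {a_i, a_j, a_k} forms a 3-term arithmetic progression. -/

import Mathlib

/-- `{u, v, w}` forms a 3-term arithmetic progression: some ordering has equal
consecutive differences, i.e. `2u = v + w` or `2v = u + w` or `2w = u + v`. -/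
def IsAP3 (u v w : ℕ) : Prop :=
  2 * u = v + w ∨ 2 * v = u + w ∨ 2 * w = u + v

/-- The sequence `x_1 = 0`, `x_i = 2^(i−2)` for `i ≥ 2`, indexed by
`Fin (n+2)` (index `0` corresponds to `x_1`). -/
def xSeq (i : ℕ) : ℕ := if i = 0 then 0 else 2 ^ (i - 1)

private lemma two_pow_inj {s t : ℕ} (h : (2:ℕ) ^ s = 2 ^ t) : s = t :=
  Nat.pow_right_injective (le_refl 2) h

private lemma xap_cons (i : ℕ) (hi : 1 ≤ i) : IsAP3 (xSeq 0) (xSeq i) (xSeq (i+1)) := by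
  right; left
  have h0 : xSeq 0 = 0 := rfl
  have hpi : xSeq i = 2 ^ (i-1) := if_neg (by omega)
  have hpj : xSeq (i+1) = 2 ^ i := by
    have : xSeq (i+1) = 2 ^ (i+1-1) := if_neg (by omega)
    simpa using this
  rw [h0, hpi, hpj, zero_add]
  have hpow : (2:ℕ)^(i-1) * 2 = 2^i := by
    rw [← pow_succ]; congr 1; omega
  omega

private lemma xap_noncons (i j : ℕ) (hi : 1 ≤ i) (hij : i + 2 ≤ j) :
    ¬ IsAP3 (xSeq 0) (xSeq i) (xSeq j) := by
  intro h
  have h0 : xSeq 0 = 0 := rfl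
  have hpi : xSeq i = 2 ^ (i-1) := if_neg (by omega)
  have hpj : xSeq j = 2 ^ (j-1) := if_neg (by omega)
  rw [h0, hpi, hpj] at h
  have p1 : 0 < (2:ℕ) ^ (i-1) := Nat.pow_pos (by norm_num)
  have p2 : 0 < (2:ℕ) ^ (j-1) := Nat.pow_pos (by norm_num)
  rcases h with h|h|h
  · omega
  · have he : (2:ℕ) ^ (i-1+1) = 2 ^ (j-1) := by rw [pow_succ]; omega
    have := two_pow_inj he
    omega
  · have he : (2:ℕ) ^ (j-1+1) = 2 ^ (i-1) := by rw [pow_succ]; omega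
    have := two_pow_inj he
    omega

private lemma valEq {x y : ℕ} (hx : x ≠ 0) (hy : y ≠ 0) (u w : ℕ)
    (h : x * 2 ^ u = y * 2 ^ w) (hv : padicValNat 2 x = padicValNat 2 y) : x = y := by
  have h2 : padicValNat 2 (x * 2^u) = padicValNat 2 (y * 2^w) := by rw [h]
  rw [padicValNat.mul hx (pow_ne_zero _ two_ne_zero),
    padicValNat.mul hy (pow_ne_zero _ two_ne_zero),
    padicValNat.prime_pow, padicValNat.prime_pow, hv] at h2
  have huw : u = w := by omega
  subst huw
  exact Nat.eq_of_mul_eq_mul_right (Nat.pow_pos (by norm_num)) h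

private lemma key_growth (k : ℕ) (hk : 2 ≤ k) (B : ℕ → ℤ)
    (hQ1 : ∀ i, 1 ≤ i → i ≤ 2*k →
      B (i+1) = -(B i) ∨ B (i+1) = 2 * B i ∨ 2 * B (i+1) = B i)
    (hQ2 : ∀ i j, 1 ≤ i → i + 2 ≤ j → j ≤ 2*k + 1 →
      B j ≠ -(B i) ∧ B j ≠ 2 * B i ∧ 2 * B j ≠ B i) :
    ∃ i, 1 ≤ i ∧ i ≤ 2*k + 1 ∧ 2 ^ (k-1) ≤ (B i).natAbs := by
  have up : ∀ j, 1 ≤ j → j ≤ 2*k → B j = 0 → B (j+1) = 0 := by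
    intro j h1 h2 h0
    rcases hQ1 j h1 h2 with h|h|h <;> omega
  have down : ∀ j, 1 ≤ j → j ≤ 2*k → B (j+1) = 0 → B j = 0 := by
    intro j h1 h2 h0
    rcases hQ1 j h1 h2 with h|h|h <;> omega
  have hnz : ∀ i, 1 ≤ i → i ≤ 2*k + 1 → B i ≠ 0 := by
    intro i h1 h2 h0
    by_cases hc : i + 1 ≤ 2*k
    · have z1 : B (i+1) = 0 := up i h1 (by omega) h0
      have z2 : B (i+2) = 0 := up (i+1) (by omega) hc z1
      exact (hQ2 i (i+2) h1 (by omega) (by omega)).1 (by omega)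
    · obtain ⟨j, rfl⟩ : ∃ j, i = j + 2 := ⟨i - 2, by omega⟩
      have z1 : B (j+1) = 0 := down (j+1) (by omega) (by omega) h0
      have z2 : B j = 0 := down j (by omega) (by omega) z1
      exact (hQ2 j (j+2) (by omega) (by omega) (by omega)).1 (by omega)
  have hrel : ∀ i, 1 ≤ i → i ≤ 2*k + 1 →
      ∃ u w : ℕ, (B i).natAbs * 2 ^ u = (B 1).natAbs * 2 ^ w := by
    intro i
    induction i with
    | zero => omega
    | succ m ih =>
      intro _ h2
      by_cases hm : m = 0
      · subst hm; exact ⟨0, 0, rfl⟩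
      · obtain ⟨u, w, huw⟩ := ih (by omega) (by omega)
        rcases hQ1 m (by omega) (by omega) with h|h|h
        · exact ⟨u, w, by rw [h, Int.natAbs_neg]; exact huw⟩
        · refine ⟨u, w + 1, ?_⟩
          have hv : (B (m+1)).natAbs = 2 * (B m).natAbs := by
            rw [h, Int.natAbs_mul]; norm_num
          calc (B (m+1)).natAbs * 2 ^ u = 2 * ((B m).natAbs * 2 ^ u) := by rw [hv]; ring
            _ = 2 * ((B 1).natAbs * 2 ^ w) := by rw [huw]
            _ = (B 1).natAbs * 2 ^ (w+1) := by rw [pow_succ]; ring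
        · refine ⟨u + 1, w, ?_⟩
          have hv : (B m).natAbs = 2 * (B (m+1)).natAbs := by
            rw [← h, Int.natAbs_mul]; norm_num
          calc (B (m+1)).natAbs * 2 ^ (u+1) = (2 * (B (m+1)).natAbs) * 2 ^ u := by
                rw [pow_succ]; ring
            _ = (B m).natAbs * 2 ^ u := by rw [hv]
            _ = (B 1).natAbs * 2 ^ w := huw
  have hdist : ∀ i j, 1 ≤ i → i + 2 ≤ j → j ≤ 2*k → (B i).natAbs ≠ (B j).natAbs := by
    intro i j h1 h2 h3 he
    rcases Int.natAbs_eq_natAbs_iff.mp he with h|h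
    · rcases hQ1 j (by omega) h3 with hh|hh|hh
      · exact (hQ2 i (j+1) h1 (by omega) (by omega)).1 (by omega)
      · exact (hQ2 i (j+1) h1 (by omega) (by omega)).2.1 (by omega)
      · exact (hQ2 i (j+1) h1 (by omega) (by omega)).2.2 (by omega)
    · exact (hQ2 i j h1 h2 (by omega)).1 (by omega)
  have hF : ∃ t, t < k ∧ k - 1 ≤ padicValNat 2 (B (2*t+1)).natAbs := by
    by_contra hcon
    push_neg at hcon
    have hmaps : ∀ t ∈ Finset.range k,
        (fun t => padicValNat 2 (B (2*t+1)).natAbs) t ∈ Finset.range (k-1) := by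
      intro t ht
      exact Finset.mem_range.mpr (hcon t (Finset.mem_range.mp ht))
    have hinj : Set.InjOn (fun t => padicValNat 2 (B (2*t+1)).natAbs)
        (Finset.range k) := by
      intro t1 ht1 t2 ht2 hft
      simp only [Finset.coe_range, Set.mem_Iio] at ht1 ht2
      by_contra hne
      -- wlog t1 < t2
      rcases Nat.lt_or_ge t1 t2 with hlt | hge
      case _ =>
        obtain ⟨u1, w1, hr1⟩ := hrel (2*t1+1) (by omega) (by omega)
        obtain ⟨u2, w2, hr2⟩ := hrel (2*t2+1) (by omega) (by omega)
        have e : (B (2*t1+1)).natAbs * 2 ^ (u1 + w2) =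
            (B (2*t2+1)).natAbs * 2 ^ (u2 + w1) := by
          rw [pow_add, pow_add, ← mul_assoc, hr1, ← mul_assoc, hr2]; ring
        have := valEq (Int.natAbs_ne_zero.mpr (hnz _ (by omega) (by omega)))
          (Int.natAbs_ne_zero.mpr (hnz _ (by omega) (by omega))) _ _ e hft
        exact hdist (2*t1+1) (2*t2+1) (by omega) (by omega) (by omega) this
      case _ =>
        have hlt : t2 < t1 := by omega
        obtain ⟨u1, w1, hr1⟩ := hrel (2*t2+1) (by omega) (by omega)
        obtain ⟨u2, w2, hr2⟩ := hrel (2*t1+1) (by omega) (by omega)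
        have e : (B (2*t2+1)).natAbs * 2 ^ (u1 + w2) =
            (B (2*t1+1)).natAbs * 2 ^ (u2 + w1) := by
          rw [pow_add, pow_add, ← mul_assoc, hr1, ← mul_assoc, hr2]; ring
        have := valEq (Int.natAbs_ne_zero.mpr (hnz _ (by omega) (by omega)))
          (Int.natAbs_ne_zero.mpr (hnz _ (by omega) (by omega))) _ _ e hft.symm
        exact hdist (2*t2+1) (2*t1+1) (by omega) (by omega) (by omega) this
    have hcard := Finset.card_le_card_of_injOn _ hmaps hinj
    simp only [Finset.card_range] at hcard
    omega
  obtain ⟨t, htk, hge⟩ := hF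
  refine ⟨2*t+1, by omega, by omega, ?_⟩
  have h1 : (2:ℕ) ^ (k-1) ≤ 2 ^ (padicValNat 2 (B (2*t+1)).natAbs) :=
    Nat.pow_le_pow_right (by norm_num) hge
  have h2 : (2:ℕ) ^ (padicValNat 2 (B (2*t+1)).natAbs) ∣ (B (2*t+1)).natAbs :=
    pow_padicValNat_dvd
  exact le_trans h1 (Nat.le_of_dvd
    (Nat.pos_of_ne_zero (Int.natAbs_ne_zero.mpr (hnz _ (by omega) (by omega)))) h2)

private lemma poly_bound (p : Polynomial ℕ) (m : ℕ) (hm : 1 ≤ m) :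
    p.eval m ≤ p.eval 1 * m ^ p.natDegree := by
  have h1 : p.eval 1 = ∑ i ∈ Finset.range (p.natDegree + 1), p.coeff i := by
    rw [Polynomial.eval_eq_sum_range]; simp
  conv_lhs => rw [Polynomial.eval_eq_sum_range]
  rw [h1, Finset.sum_mul]
  apply Finset.sum_le_sum
  intro i hi
  exact Nat.mul_le_mul_left _
    (Nat.pow_le_pow_right hm (Nat.le_of_lt_succ (Finset.mem_range.mp hi)))

private lemma exists_good_k (C d : ℕ) : ∃ k : ℕ, 2 ≤ k ∧ C * (2*k) ^ d < 2 ^ (k - 1) := by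
  set T := C + d + 4 with hT
  have hT4 : 4 ≤ T := by omega
  refine ⟨2 ^ (T^2), ?_, ?_⟩
  · calc (2:ℕ) = 2 ^ 1 := rfl
      _ ≤ 2 ^ (T^2) := Nat.pow_le_pow_right (by norm_num) (by nlinarith)
  · have h1 : T < 2 ^ T := Nat.lt_two_pow_self (n := T)
    have h2 : T^3 < 2^(3*T) := by
      calc T^3 < (2^T)^3 := Nat.pow_lt_pow_left h1 (by norm_num)
        _ = 2^(3*T) := by rw [← pow_mul, mul_comm]
    have h4 : 3*T+1 ≤ T^2 := by nlinarith
    have h5 : (2:ℕ)^(3*T+1) ≤ 2^(T^2) := Nat.pow_le_pow_right (by norm_num) h4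
    have h3 : 2*T^3 < 2^(T^2) := by
      calc 2*T^3 < 2 * 2^(3*T) := by omega
        _ = 2^(3*T+1) := by rw [pow_succ]; ring
        _ ≤ 2^(T^2) := h5
    have h6 : C + (T^2+1)*d + 2 ≤ 2*T^3 := by nlinarith
    have hexp : C + (T^2+1)*d < 2^(T^2) - 1 := by omega
    have hC : C ≤ 2^C := le_of_lt (Nat.lt_two_pow_self (n := C))
    calc C * (2 * 2^(T^2)) ^ d = C * (2^(T^2+1))^d := by rw [pow_succ]; ring_nf
      _ = C * 2^((T^2+1)*d) := by rw [← pow_mul]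
      _ ≤ 2^C * 2^((T^2+1)*d) := Nat.mul_le_mul_right _ hC
      _ = 2^(C + (T^2+1)*d) := by rw [← pow_add]
      _ < 2^(2^(T^2) - 1) := Nat.pow_lt_pow_right (by norm_num) hexp

/-- Lemma 3: for every polynomial `p` with nonnegative integer
coefficients there is an `n` such that no function `a : {1,…,n+2} → ℕ` with
`a_i ≤ p(n)` preserves exactly the 3-term APs of `x_1, …, x_{n+2}`. -/
theorem no_small_ap_preserving_replacement (p : Polynomial ℕ) :
    ∃ n : ℕ, ¬ ∃ a : Fin (n + 2) → ℕ,
      (∀ i : Fin (n + 2), a i ≤ p.eval n) ∧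
      (∀ i j l : Fin (n + 2), i ≠ j → j ≠ l → i ≠ l →
        (IsAP3 (xSeq i) (xSeq j) (xSeq l) ↔ IsAP3 (a i) (a j) (a l))) := by
  obtain ⟨k, hk2, hklt⟩ := exists_good_k (p.eval 1) p.natDegree
  refine ⟨2*k, ?_⟩
  rintro ⟨a, hbound, hap⟩
  have h0n : (0:ℕ) < 2*k + 2 := by omega
  set B : ℕ → ℤ := fun i =>
    if h : i < 2*k + 2 then ((a ⟨i, h⟩ : ℤ) - (a ⟨0, h0n⟩ : ℤ)) else 0 with hB
  have hBval : ∀ i (h : i < 2*k+2), B i = (a ⟨i, h⟩ : ℤ) - (a ⟨0, h0n⟩ : ℤ) := by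
    intro i h; simp only [hB, dif_pos h]
  have hQ1 : ∀ i, 1 ≤ i → i ≤ 2*k →
      (B (i+1) = -(B i) ∨ B (i+1) = 2 * B i ∨ 2 * B (i+1) = B i) := by
    intro i h1 h2
    have hi : i < 2*k + 2 := by omega
    have hi1 : i + 1 < 2*k + 2 := by omega
    have ha' := (hap ⟨0, h0n⟩ ⟨i, hi⟩ ⟨i+1, hi1⟩
      (Fin.ne_of_val_ne (show (0:ℕ) ≠ i by omega))
      (Fin.ne_of_val_ne (show i ≠ i+1 by omega))
      (Fin.ne_of_val_ne (show (0:ℕ) ≠ i+1 by omega))).mp (xap_cons i h1)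
    rw [hBval i hi, hBval (i+1) hi1]
    unfold IsAP3 at ha'
    omega
  have hQ2 : ∀ i j, 1 ≤ i → i + 2 ≤ j → j ≤ 2*k + 1 →
      (B j ≠ -(B i) ∧ B j ≠ 2 * B i ∧ 2 * B j ≠ B i) := by
    intro i j h1 h2 h3
    have hi : i < 2*k + 2 := by omega
    have hj : j < 2*k + 2 := by omega
    have hnot : ¬ IsAP3 (a ⟨0, h0n⟩) (a ⟨i, hi⟩) (a ⟨j, hj⟩) := by
      intro hcon
      exact xap_noncons i j h1 h2 ((hap ⟨0, h0n⟩ ⟨i, hi⟩ ⟨j, hj⟩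
        (Fin.ne_of_val_ne (show (0:ℕ) ≠ i by omega))
        (Fin.ne_of_val_ne (show i ≠ j by omega))
        (Fin.ne_of_val_ne (show (0:ℕ) ≠ j by omega))).mpr hcon)
    rw [hBval i hi, hBval j hj]
    unfold IsAP3 at hnot
    omega
  obtain ⟨i, hi1, hi2, hlarge⟩ := key_growth k hk2 B hQ1 hQ2
  have hi : i < 2*k + 2 := by omega
  rw [hBval i hi] at hlarge
  have hb1 : a ⟨i, hi⟩ ≤ p.eval (2*k) := hbound _
  have hb2 : a ⟨0, h0n⟩ ≤ p.eval (2*k) := hbound _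
  have hpn : p.eval (2*k) < 2 ^ (k-1) := by
    calc p.eval (2*k) ≤ p.eval 1 * (2*k) ^ p.natDegree := poly_bound p (2*k) (by omega)
      _ < 2 ^ (k-1) := hklt
  omega
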